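/- Let U = U(P,Q) be a regular Lucas sequence (U_0=0, U_1=1, U_{n+2}=P·U_{n+1}−Q·U_n with gcd(P,Q)=1 and U_n ≠ 0 for n ≥ 1). Then for all m, n ≥ 0, gcd(U_m, U_n) = |U_{gcd(m,n)}|. -/

import Mathlib

/-- The Lucas sequence `U(P,Q)`: `U_0 = 0`, `U_1 = 1`, `U_{n+2} = P·U_{n+1} − Q·U_n`. -/
def lucasU (P Q : ℤ) : ℕ → ℤ
  | 0 => 0
  | 1 => 1
  | n + 2 => P * lucasU P Q (n + 1) - Q * lucasU P Q n

namespace Stmt13Aux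

lemma int_gcd_add_mul (a b c : ℤ) : Int.gcd (a + b * c) c = Int.gcd a c := by
  apply Nat.dvd_antisymm
  · rw [← Int.natCast_dvd_natCast]
    refine Int.dvd_coe_gcd ?_ (Int.gcd_dvd_right _ _)
    have h1 : (↑(Int.gcd (a + b * c) c) : ℤ) ∣ a + b * c := Int.gcd_dvd_left _ _
    have h2 : (↑(Int.gcd (a + b * c) c) : ℤ) ∣ c := Int.gcd_dvd_right _ _
    have := h1.sub (h2.mul_left b)
    simpa using this
  · rw [← Int.natCast_dvd_natCast]
    refine Int.dvd_coe_gcd ?_ (Int.gcd_dvd_right _ _)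
    exact (Int.gcd_dvd_left (a := a) (b := c)).add ((Int.gcd_dvd_right (a := a) (b := c)).mul_left b)

lemma int_gcd_mul_cancel {k n : ℤ} (m : ℤ) (h : IsCoprime k n) :
    Int.gcd (k * m) n = Int.gcd m n := by
  have hk : Nat.Coprime k.natAbs n.natAbs := Int.isCoprime_iff_gcd_eq_one.mp h
  rw [Int.gcd, Int.gcd, Int.natAbs_mul]
  exact Nat.Coprime.gcd_mul_left_cancel _ hk

variable (P Q : ℤ)

/-- Addition formula: `U_{m+n+1} = U_{m+1} U_{n+1} - Q U_m U_n`. -/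
lemma addf : ∀ m n : ℕ, lucasU P Q (m + n + 1) =
    lucasU P Q (m + 1) * lucasU P Q (n + 1) - Q * lucasU P Q m * lucasU P Q n
  | 0, n => by simp [lucasU]
  | 1, n => by
    have h : 1 + n + 1 = n + 2 := by ring
    rw [h]
    show P * lucasU P Q (n + 1) - Q * lucasU P Q n =
      lucasU P Q 2 * lucasU P Q (n + 1) - Q * lucasU P Q 1 * lucasU P Q n
    show _ = (P * lucasU P Q 1 - Q * lucasU P Q 0) * lucasU P Q (n + 1) - Q * lucasU P Q 1 * lucasU P Q n
    show _ = (P * 1 - Q * 0) * lucasU P Q (n + 1) - Q * 1 * lucasU P Q n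
    ring
  | (m+2), n => by
    have h1 := addf m n
    have h2 := addf (m+1) n
    have h : m + 2 + n + 1 = m + n + 1 + 2 := by ring
    rw [h]
    show P * lucasU P Q (m + n + 1 + 1) - Q * lucasU P Q (m + n + 1) = _
    have h3 : m + n + 1 + 1 = (m + 1) + n + 1 := by ring
    rw [h3, h1, h2]
    have e1 : lucasU P Q (m + 2 + 1) = P * lucasU P Q (m + 2) - Q * lucasU P Q (m + 1) := rfl
    have e2 : lucasU P Q (m + 2) = P * lucasU P Q (m + 1) - Q * lucasU P Q m := rfl
    rw [e1, e2]
    ring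

variable {P Q}

/-- `Q` is coprime to every `U_{n+1}`. -/
lemma copQ (hcop : IsCoprime P Q) : ∀ n : ℕ, IsCoprime Q (lucasU P Q (n + 1))
  | 0 => by simpa [lucasU] using isCoprime_one_right
  | n + 1 => by
    have ih := copQ hcop n
    have h1 : IsCoprime Q (P * lucasU P Q (n + 1)) := hcop.symm.mul_right ih
    have h2 := h1.add_mul_left_right (-lucasU P Q n)
    have e : lucasU P Q (n + 1 + 1) = P * lucasU P Q (n + 1) + Q * -lucasU P Q n := by
      show P * lucasU P Q (n + 1) - Q * lucasU P Q n = _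
      ring
    rw [e]
    exact h2

/-- Consecutive terms are coprime. -/
lemma copSucc (hcop : IsCoprime P Q) : ∀ n : ℕ, IsCoprime (lucasU P Q n) (lucasU P Q (n + 1))
  | 0 => by simpa [lucasU] using isCoprime_one_right
  | n + 1 => by
    have ih := (copSucc hcop n).symm
    have hq := (copQ hcop n).symm
    have h1 : IsCoprime (lucasU P Q (n + 1)) (-(Q * lucasU P Q n)) := (hq.mul_right ih).neg_right
    have h2 := h1.add_mul_left_right P
    have e : lucasU P Q (n + 1 + 1) = -(Q * lucasU P Q n) + lucasU P Q (n + 1) * P := by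
      show P * lucasU P Q (n + 1) - Q * lucasU P Q n = _
      ring
    rw [e]
    exact h2

/-- One reduction step: `gcd(U_{m+(n+1)}, U_{n+1}) = gcd(U_m, U_{n+1})`. -/
lemma step (hcop : IsCoprime P Q) (m n : ℕ) :
    Int.gcd (lucasU P Q (m + (n + 1))) (lucasU P Q (n + 1))
      = Int.gcd (lucasU P Q m) (lucasU P Q (n + 1)) := by
  have h : m + (n + 1) = m + n + 1 := by ring
  rw [h, addf]
  have e : lucasU P Q (m + 1) * lucasU P Q (n + 1) - Q * lucasU P Q m * lucasU P Q n
      = (Q * lucasU P Q n) * lucasU P Q m * (-1) + lucasU P Q (m + 1) * lucasU P Q (n + 1) := by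
    ring
  rw [e]
  rw [int_gcd_add_mul]
  have hc : IsCoprime (Q * lucasU P Q n) (lucasU P Q (n + 1)) :=
    (copQ hcop n).mul_left (copSucc hcop n)
  have : (Q * lucasU P Q n) * lucasU P Q m * (-1) = (Q * lucasU P Q n) * (lucasU P Q m * (-1)) := by
    ring
  rw [this, int_gcd_mul_cancel _ hc]
  rw [show lucasU P Q m * (-1) = -(lucasU P Q m) by ring, Int.neg_gcd]

lemma stepk (hcop : IsCoprime P Q) (k m n : ℕ) :
    Int.gcd (lucasU P Q (m + k * (n + 1))) (lucasU P Q (n + 1))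
      = Int.gcd (lucasU P Q m) (lucasU P Q (n + 1)) := by
  induction k with
  | zero => simp
  | succ k ih =>
    have h : m + (k + 1) * (n + 1) = (m + k * (n + 1)) + (n + 1) := by ring
    rw [h, step hcop, ih]

lemma main (hcop : IsCoprime P Q) : ∀ m n : ℕ,
    Int.gcd (lucasU P Q m) (lucasU P Q n) = (lucasU P Q (Nat.gcd m n)).natAbs := by
  intro m
  induction m using Nat.strong_induction_on with
  | _ m ih =>
    intro n
    match m with
    | 0 => simp [lucasU, Int.gcd]
    | j + 1 =>
      have hn : n = n % (j + 1) + (n / (j + 1)) * (j + 1) := by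
        rw [Nat.mod_add_div']
      rw [Int.gcd_comm]
      calc Int.gcd (lucasU P Q n) (lucasU P Q (j + 1))
          = Int.gcd (lucasU P Q (n % (j + 1) + (n / (j + 1)) * (j + 1))) (lucasU P Q (j + 1)) := by
            rw [← hn]
        _ = Int.gcd (lucasU P Q (n % (j + 1))) (lucasU P Q (j + 1)) := stepk hcop _ _ _
        _ = (lucasU P Q (Nat.gcd (n % (j + 1)) (j + 1))).natAbs :=
            ih _ (Nat.mod_lt _ (Nat.succ_pos j)) _
        _ = (lucasU P Q (Nat.gcd (j + 1) n)).natAbs := by rw [← Nat.gcd_rec]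

end Stmt13Aux

/-- A regular Lucas sequence is a strong divisibility sequence:
`gcd(U_m, U_n) = |U_{gcd(m,n)}|`. -/
theorem stmt13 (P Q : ℤ) (hP : P ≠ 0) (hQ : Q ≠ 0) (hcop : IsCoprime P Q)
    (hreg : ∀ n : ℕ, 1 ≤ n → lucasU P Q n ≠ 0) :
    ∀ m n : ℕ, Int.gcd (lucasU P Q m) (lucasU P Q n) = (lucasU P Q (Nat.gcd m n)).natAbs :=
  Stmt13Aux.main hcop
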